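/- Let λ ∈ ℝ, λ ≠ 0, and suppose complex-valued functions v, z, u¹, u², u³ on (0,L) satisfy: z = iλv, λ²ρv + αv_xx + γu³_x − az = 0, u² − u³_x = iλu¹, −(μ/(ξε₃))u¹ − bu² = iλu², −(μ/ε₃)u¹_x + (γ/ε₃)iλ v_x − cu³ = iλu³, with boundary conditions v(0) = 0, u¹(0) = u¹(L) = 0, and a > 0, b = c = 0. If additionally z = 0 (from the dissipation identity), then v = u¹ = u² = u³ = 0. -/

import Mathlib

open Set Complex

private lemma const_on_Ioo {a b : ℝ} {f : ℝ → ℂ} (hf : Differentiable ℝ f)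
    (h0 : ∀ x ∈ Set.Ioo a b, deriv f x = 0) :
    ∀ x ∈ Set.Ioo a b, ∀ y ∈ Set.Ioo a b, f x = f y := by
  intro x hx y hy
  refine (convex_Ioo a b).is_const_of_fderivWithin_eq_zero hf.differentiableOn
    (fun z hz => ?_) hx hy
  rw [fderivWithin_of_isOpen isOpen_Ioo hz, (hf z).hasDerivAt.hasFDerivAt.fderiv, h0 z hz]
  ext
  simp

/-- Case 5 of strong stability (a > 0, b = c = 0): the eigenvalue
system on the imaginary axis with z = 0 forces all components to vanish. -/
theorem stmt_4 (L ρ α γ μ ξ ε₃ a lam : ℝ)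
    (hL : 0 < L) (hρ : 0 < ρ) (hα : 0 < α) (hγ : 0 < γ) (hμ : 0 < μ)
    (hξ : 0 < ξ) (hε : 0 < ε₃) (ha : 0 < a) (hlam : lam ≠ 0)
    (v z u1 u2 u3 : ℝ → ℂ)
    (hv : Differentiable ℝ v) (hv' : Differentiable ℝ (deriv v))
    (hu1 : Differentiable ℝ u1) (hu3 : Differentiable ℝ u3)
    (e1 : ∀ x ∈ Icc (0:ℝ) L, z x = Complex.I * (lam:ℂ) * v x)
    (e2 : ∀ x ∈ Icc (0:ℝ) L,
      ((lam ^ 2 * ρ : ℝ):ℂ) * v x + (α:ℂ) * deriv (deriv v) x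
        + (γ:ℂ) * deriv u3 x - (a:ℂ) * z x = 0)
    (e3 : ∀ x ∈ Icc (0:ℝ) L, u2 x - deriv u3 x = Complex.I * (lam:ℂ) * u1 x)
    (e4 : ∀ x ∈ Icc (0:ℝ) L,
      -((μ / (ξ * ε₃) : ℝ):ℂ) * u1 x = Complex.I * (lam:ℂ) * u2 x)
    (e5 : ∀ x ∈ Icc (0:ℝ) L,
      -((μ / ε₃ : ℝ):ℂ) * deriv u1 x + ((γ / ε₃ : ℝ):ℂ) * Complex.I * (lam:ℂ) * deriv v x
        = Complex.I * (lam:ℂ) * u3 x)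
    (hb0 : v 0 = 0) (hb1 : u1 0 = 0) (hb2 : u1 L = 0)
    (hz : ∀ x ∈ Icc (0:ℝ) L, z x = 0) :
    ∀ x ∈ Icc (0:ℝ) L, v x = 0 ∧ u1 x = 0 ∧ u2 x = 0 ∧ u3 x = 0 := by
  have hIl : (Complex.I * (lam:ℂ)) ≠ 0 := by
    simp [Complex.I_ne_zero, Complex.ofReal_eq_zero, hlam]
  have hμC : (μ:ℂ) ≠ 0 := by exact_mod_cast hμ.ne'
  have hεC : (ε₃:ℂ) ≠ 0 := by exact_mod_cast hε.ne'
  -- v = 0 on Icc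
  have hv0 : ∀ x ∈ Icc (0:ℝ) L, v x = 0 := by
    intro x hx
    have := (e1 x hx).symm.trans (hz x hx)
    exact (mul_eq_zero.1 this).resolve_left hIl
  have hsub : Ioo (0:ℝ) L ⊆ Icc 0 L := Ioo_subset_Icc_self
  -- deriv v = 0 on Ioo
  have hdv0 : ∀ x ∈ Ioo (0:ℝ) L, deriv v x = 0 := by
    intro x hx
    have h : v =ᶠ[nhds x] (fun _ => 0) :=
      Filter.eventuallyEq_of_mem (isOpen_Ioo.mem_nhds hx) (fun y hy => hv0 y (hsub hy))
    rw [h.deriv_eq]; simp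
  -- deriv (deriv v) = 0 on Ioo
  have hddv0 : ∀ x ∈ Ioo (0:ℝ) L, deriv (deriv v) x = 0 := by
    intro x hx
    have h : deriv v =ᶠ[nhds x] (fun _ => 0) :=
      Filter.eventuallyEq_of_mem (isOpen_Ioo.mem_nhds hx) hdv0
    rw [h.deriv_eq]; simp
  -- deriv u3 = 0 on Ioo
  have hdu3 : ∀ x ∈ Ioo (0:ℝ) L, deriv u3 x = 0 := by
    intro x hx
    have h2 := e2 x (hsub hx)
    rw [hv0 x (hsub hx), hz x (hsub hx), hddv0 x hx] at h2
    have hγC : (γ:ℂ) ≠ 0 := by exact_mod_cast hγ.ne'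
    have : (γ:ℂ) * deriv u3 x = 0 := by linear_combination h2
    exact (mul_eq_zero.1 this).resolve_left hγC
  -- u3 constant = k on Ioo
  set k : ℂ := u3 (L/2) with hk
  have hmem : L/2 ∈ Ioo (0:ℝ) L := ⟨by linarith, by linarith⟩
  have hu3k : ∀ x ∈ Ioo (0:ℝ) L, u3 x = k :=
    fun x hx => const_on_Ioo hu3 hdu3 x hx _ hmem
  -- deriv u1 = c * u3 on Ioo, where c = -I*lam*ε₃/μ
  set c : ℂ := -(Complex.I * (lam:ℂ) * (ε₃:ℂ) / (μ:ℂ)) with hc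
  have hdu1 : ∀ x ∈ Ioo (0:ℝ) L, deriv u1 x = c * u3 x := by
    intro x hx
    have h5 := e5 x (hsub hx)
    rw [hdv0 x hx] at h5
    have h5' : -((μ:ℂ)/(ε₃:ℂ)) * deriv u1 x = Complex.I * (lam:ℂ) * u3 x := by
      push_cast at h5; linear_combination h5
    rw [hc]
    field_simp at h5' ⊢
    linear_combination -h5'
  -- u1 x = c*k*x + d on Ioo
  set g : ℝ → ℂ := fun x => u1 x - c * k * (x:ℂ) with hg
  have hgd : Differentiable ℝ g := by
    apply hu1.sub
    apply Differentiable.const_mul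
    exact Complex.ofRealCLM.differentiable
  have hgd0 : ∀ x ∈ Ioo (0:ℝ) L, deriv g x = 0 := by
    intro x hx
    have : deriv g x = deriv u1 x - c * k := by
      rw [hg]
      rw [deriv_fun_sub (hu1 x)]
      · congr 1
        have : HasDerivAt (fun y : ℝ => c * k * (y:ℂ)) (c * k) x := by
          simpa using (Complex.ofRealCLM.hasDerivAt (x := x)).const_mul (c * k)
        exact this.deriv
      · exact (Complex.ofRealCLM.differentiable x).const_mul (c*k)
    rw [this, hdu1 x hx, hu3k x hx, sub_self]
  set d : ℂ := g (L/2) with hd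
  have hgk : ∀ x ∈ Ioo (0:ℝ) L, g x = d :=
    fun x hx => const_on_Ioo hgd hgd0 x hx _ hmem
  -- extend to closure: u1 = c*k*x + d on Icc
  have hclos : closure (Ioo (0:ℝ) L) = Icc 0 L := closure_Ioo hL.ne
  have hu1aff : ∀ x ∈ Icc (0:ℝ) L, u1 x = c * k * (x:ℂ) + d := by
    have heq : EqOn u1 (fun x : ℝ => c * k * (x:ℂ) + d) (Icc 0 L) := by
      rw [← hclos]
      refine Set.EqOn.closure ?_ hu1.continuous
        ((continuous_const.mul Complex.continuous_ofReal).add continuous_const)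
      intro x hx
      have := hgk x hx
      rw [hg] at this
      have h := sub_eq_iff_eq_add.1 this
      rw [h]; ring
    exact heq
  -- boundary conditions
  have hd0 : d = 0 := by
    have := hu1aff 0 ⟨le_refl 0, hL.le⟩
    rw [hb1] at this; simpa using this.symm
  have hck : c * k = 0 := by
    have := hu1aff L ⟨hL.le, le_refl L⟩
    rw [hb2, hd0] at this
    have hLC : (L:ℂ) ≠ 0 := by exact_mod_cast hL.ne'
    have h : c * k * (L:ℂ) = 0 := by linear_combination -this
    exact (mul_eq_zero.1 h).resolve_right hLC
  have hcne : c ≠ 0 := by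
    rw [hc]
    simp [hμC, hεC, Complex.I_ne_zero, Complex.ofReal_eq_zero, hlam]
  have hk0 : k = 0 := (mul_eq_zero.1 hck).resolve_left hcne
  -- u1 = 0 on Icc
  have hu10 : ∀ x ∈ Icc (0:ℝ) L, u1 x = 0 := by
    intro x hx
    rw [hu1aff x hx, hck, hd0, zero_mul, zero_add]
  -- u2 = 0 on Icc
  have hu20 : ∀ x ∈ Icc (0:ℝ) L, u2 x = 0 := by
    intro x hx
    have h4 := e4 x hx
    rw [hu10 x hx, mul_zero] at h4
    exact (mul_eq_zero.1 h4.symm).resolve_left hIl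
  -- u3 = 0 on Icc (0 on Ioo, extend by continuity)
  have hu30 : ∀ x ∈ Icc (0:ℝ) L, u3 x = 0 := by
    have heq : EqOn u3 (fun _ : ℝ => 0) (Icc 0 L) := by
      rw [← hclos]
      apply Set.EqOn.closure _ hu3.continuous continuous_const
      intro x hx
      rw [hu3k x hx, hk0]
    exact fun x hx => heq hx
  exact fun x hx => ⟨hv0 x hx, hu10 x hx, hu20 x hx, hu30 x hx⟩
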